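/- Let N ≥ 1, d = 2^N, S = σ_z^{⊗N}, Z_0 = (I+S)/2, Z_1 = (I−S)/2, Π^{(2)} = (I + SWAP)/2, ρ_f = (1/2)[(Z_0⊗Z_0)Π^{(2)}/Tr((Z_0⊗Z_0)Π^{(2)}) + (Z_1⊗Z_1)Π^{(2)}/Tr((Z_1⊗Z_1)Π^{(2)})], and 𝒵 = Tr((Z_0⊗Z_0)Π^{(2)}). Then for every d×d unitary U, the Z2-asymmetry generating power A_p(U) = 1 − Tr[(Z_0⊗Z_0 + Z_1⊗Z_1) U^{⊗2} ρ_f U^{†⊗2}] satisfies the out-of-time-ordered-correlator identity A_p(U) = 1 − (1/(4𝒵)) Σ_{s1, s2 ∈ {0,1}} [ (Tr(Z_{s1} U Z_{s2} U†))² + Tr(Z_{s1} U Z_{s2} U† Z_{s1} U Z_{s2} U†) ]. -/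

import Mathlib

open Matrix
open scoped Kronecker

noncomputable section

/-- Index type of the `N`-qubit Hilbert space `ℂ^(2^N)`. -/
abbrev QIdx (N : ℕ) := Fin N → Fin 2

/-- `σ_z^{⊗N}`: the `N`-fold Kronecker power of `diag(1, -1)`. -/
def Smat (N : ℕ) : Matrix (QIdx N) (QIdx N) ℂ :=
  Matrix.diagonal fun x => ∏ i, (-1 : ℂ) ^ (x i : ℕ)

/-- `Z_0 = (I + S)/2` and `Z_1 = (I - S)/2`. -/
def Zproj (N : ℕ) (s : Fin 2) : Matrix (QIdx N) (QIdx N) ℂ :=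
  (2 : ℂ)⁻¹ • (1 + (-1 : ℂ) ^ (s : ℕ) • Smat N)

/-- The flip (SWAP) operator on `ℂ^d ⊗ ℂ^d`. -/
def swapMat (ι : Type*) [DecidableEq ι] : Matrix (ι × ι) (ι × ι) ℂ :=
  fun p q => if p.1 = q.2 ∧ p.2 = q.1 then 1 else 0

/-- `Π^{(2)} = (I + SWAP)/2`. -/
def Pi2 (N : ℕ) : Matrix (QIdx N × QIdx N) (QIdx N × QIdx N) ℂ :=
  (2 : ℂ)⁻¹ • (1 + swapMat (QIdx N))

/-- `ρ_f`, the second moment of the uniform ensemble of `Z2`-free pure states. -/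
def rhoF (N : ℕ) : Matrix (QIdx N × QIdx N) (QIdx N × QIdx N) ℂ :=
  (2 : ℂ)⁻¹ •
    ((Matrix.trace ((Zproj N 0 ⊗ₖ Zproj N 0) * Pi2 N))⁻¹ • ((Zproj N 0 ⊗ₖ Zproj N 0) * Pi2 N) +
     (Matrix.trace ((Zproj N 1 ⊗ₖ Zproj N 1) * Pi2 N))⁻¹ • ((Zproj N 1 ⊗ₖ Zproj N 1) * Pi2 N))

/-- `A_p(U)`, the linear Z2-asymmetry generating power of `U`. -/
def Ap (N : ℕ) (U : Matrix (QIdx N) (QIdx N) ℂ) : ℂ :=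
  1 - Matrix.trace ((Zproj N 0 ⊗ₖ Zproj N 0 + Zproj N 1 ⊗ₖ Zproj N 1) *
      ((U ⊗ₖ U) * rhoF N * (U ⊗ₖ U)ᴴ))

/-! ### Auxiliary lemmas -/

lemma kron_conjTranspose {ι : Type*} [Fintype ι] (A B : Matrix ι ι ℂ) :
    (A ⊗ₖ B)ᴴ = Aᴴ ⊗ₖ Bᴴ := by
  ext p q
  simp [Matrix.conjTranspose_apply, Matrix.kroneckerMap_apply, mul_comm]

lemma trace_kron_swap {ι : Type*} [Fintype ι] [DecidableEq ι] (A B : Matrix ι ι ℂ) :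
    Matrix.trace ((A ⊗ₖ B) * swapMat ι) = Matrix.trace (A * B) := by
  simp only [Matrix.trace, Matrix.diag, Matrix.mul_apply, swapMat,
    Matrix.kroneckerMap_apply, Fintype.sum_prod_type, mul_ite, mul_one, mul_zero]
  congr 1
  ext i
  rw [Finset.sum_comm]
  congr 1
  ext j
  rw [Finset.sum_comm]
  rw [Finset.sum_eq_single i, Finset.sum_eq_single j] <;>
    simp (config := { contextual := true }) [eq_comm]

lemma Smat_mul_Smat (N : ℕ) : Smat N * Smat N = 1 := by
  rw [Smat, Matrix.diagonal_mul_diagonal]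
  convert Matrix.diagonal_one
  rw [← Finset.prod_mul_distrib]
  refine Finset.prod_eq_one fun i _ => ?_
  rw [← pow_add, ← two_mul, pow_mul]
  simp

lemma trace_Smat (N : ℕ) (hN : 1 ≤ N) : Matrix.trace (Smat N) = 0 := by
  have h0 : (0 : ℕ) < N := hN
  rw [Smat, Matrix.trace_diagonal]
  let i0 : Fin N := ⟨0, h0⟩
  let e : QIdx N ≃ QIdx N :=
    { toFun := fun x => Function.update x i0 (x i0 + 1)
      invFun := fun x => Function.update x i0 (x i0 + 1)
      left_inv := by
        intro x; funext j
        by_cases h : j = i0 <;> simp [Function.update, h]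
        omega
      right_inv := by
        intro x; funext j
        by_cases h : j = i0 <;> simp [Function.update, h]
        omega }
  have key : ∀ x : QIdx N,
      (∏ i, (-1 : ℂ) ^ ((e x) i : ℕ)) = - ∏ i, (-1 : ℂ) ^ ((x i : ℕ)) := by
    intro x
    rw [← Finset.prod_erase_mul _ _ (Finset.mem_univ i0),
        ← Finset.prod_erase_mul _ _ (Finset.mem_univ i0)]
    have h1 : ∀ j ∈ Finset.univ.erase i0, (-1 : ℂ) ^ ((e x) j : ℕ) = (-1 : ℂ) ^ ((x j : ℕ)) := by
      intro j hj
      have : j ≠ i0 := Finset.ne_of_mem_erase hj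
      simp [e, Function.update, this]
    rw [Finset.prod_congr rfl h1]
    have h2 : (e x) i0 = x i0 + 1 := by simp [e, Function.update]
    rw [h2]
    have h3 : ∀ a : Fin 2, (-1:ℂ)^((a + 1 : Fin 2):ℕ) = -(-1:ℂ)^((a:ℕ)) := by
      intro a; fin_cases a <;> norm_num [show ((2:Fin 2):ℕ) = 0 from rfl, show ((1 + 1 : Fin 2) : ℕ) = 0 from rfl]
    rw [h3]; ring
  have heq : (∑ x : QIdx N, ∏ i, (-1:ℂ)^((x i:ℕ))) = -∑ x : QIdx N, ∏ i, (-1:ℂ)^((x i:ℕ)) := by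
    calc (∑ x : QIdx N, ∏ i, (-1:ℂ)^((x i:ℕ)))
        = ∑ x : QIdx N, ∏ i, (-1:ℂ)^(((e x) i:ℕ)) :=
          (Equiv.sum_comp e (fun x : QIdx N => ∏ i, (-1:ℂ)^((x i:ℕ)))).symm
      _ = ∑ x : QIdx N, -(∏ i, (-1:ℂ)^((x i:ℕ))) := Finset.sum_congr rfl (fun x _ => key x)
      _ = -∑ x : QIdx N, ∏ i, (-1:ℂ)^((x i:ℕ)) := by rw [Finset.sum_neg_distrib]
  linear_combination heq / 2

lemma trace_Zcal_expand (N : ℕ) (s : Fin 2) :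
    Matrix.trace ((Zproj N s ⊗ₖ Zproj N s) * Pi2 N) =
    (2:ℂ)⁻¹ * ((Matrix.trace (Zproj N s))^2 + Matrix.trace (Zproj N s * Zproj N s)) := by
  rw [Pi2, Matrix.mul_smul, Matrix.trace_smul, Matrix.mul_add, Matrix.mul_one,
    Matrix.trace_add, Matrix.trace_kronecker, trace_kron_swap, smul_eq_mul, sq]

lemma trace_Zproj (N : ℕ) (hN : 1 ≤ N) (s : Fin 2) :
    Matrix.trace (Zproj N s) = (2:ℂ)⁻¹ * Matrix.trace (1 : Matrix (QIdx N) (QIdx N) ℂ) := by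
  rw [Zproj, Matrix.trace_smul, Matrix.trace_add, Matrix.trace_smul, trace_Smat N hN]
  simp

lemma trace_Zproj_sq (N : ℕ) (hN : 1 ≤ N) (s : Fin 2) :
    Matrix.trace (Zproj N s * Zproj N s) =
      (2:ℂ)⁻¹ * Matrix.trace (1 : Matrix (QIdx N) (QIdx N) ℂ) := by
  have h2 : ((-1:ℂ)^(s:ℕ)) * ((-1:ℂ)^(s:ℕ)) = 1 := by fin_cases s <;> norm_num
  rw [Zproj]
  simp only [Matrix.smul_mul, Matrix.mul_smul, Matrix.add_mul, Matrix.mul_add, Matrix.one_mul,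
    Matrix.mul_one, smul_smul, h2, Smat_mul_Smat, one_smul, Matrix.trace_add, Matrix.trace_smul,
    trace_Smat N hN, smul_eq_mul, mul_zero, add_zero]
  ring_nf
  have h3 : ((-1:ℂ))^((s:ℕ)*2) = 1 := by rw [pow_mul, sq, h2]
  rw [h3]
  ring

lemma Zcal_one_eq_zero (N : ℕ) (hN : 1 ≤ N) :
    Matrix.trace ((Zproj N 1 ⊗ₖ Zproj N 1) * Pi2 N) =
    Matrix.trace ((Zproj N 0 ⊗ₖ Zproj N 0) * Pi2 N) := by
  rw [trace_Zcal_expand, trace_Zcal_expand, trace_Zproj N hN, trace_Zproj N hN,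
    trace_Zproj_sq N hN, trace_Zproj_sq N hN]

lemma kron_swap_conj_trace {ι : Type*} [Fintype ι] [DecidableEq ι]
    (A B U : Matrix ι ι ℂ) :
    Matrix.trace ((A ⊗ₖ A) * ((U ⊗ₖ U) * ((B ⊗ₖ B) * swapMat ι) * (Uᴴ ⊗ₖ Uᴴ))) =
    Matrix.trace (A * U * B * Uᴴ * (A * U * B * Uᴴ)) := by
  have e1 : (U ⊗ₖ U) * ((B ⊗ₖ B) * swapMat ι) = ((U * B) ⊗ₖ (U * B)) * swapMat ι := by
    rw [← Matrix.mul_assoc, ← Matrix.mul_kronecker_mul]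
  have e2 : (A ⊗ₖ A) * (((U * B) ⊗ₖ (U * B)) * swapMat ι * (Uᴴ ⊗ₖ Uᴴ)) =
      ((A * (U * B)) ⊗ₖ (A * (U * B))) * swapMat ι * (Uᴴ ⊗ₖ Uᴴ) := by
    rw [← Matrix.mul_assoc, ← Matrix.mul_assoc, ← Matrix.mul_kronecker_mul]
  rw [e1, e2, Matrix.trace_mul_comm, ← Matrix.mul_assoc, ← Matrix.mul_kronecker_mul,
    trace_kron_swap]
  rw [show (Uᴴ * (A * (U * B))) * (Uᴴ * (A * (U * B))) =
      Uᴴ * ((A * (U * B)) * (Uᴴ * (A * (U * B)))) from by simp only [Matrix.mul_assoc],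
    Matrix.trace_mul_comm]
  simp only [Matrix.mul_assoc]

lemma key_trace (N : ℕ) (U : Matrix (QIdx N) (QIdx N) ℂ) (s1 s2 : Fin 2) :
    Matrix.trace ((Zproj N s1 ⊗ₖ Zproj N s1) *
      ((U ⊗ₖ U) * ((Zproj N s2 ⊗ₖ Zproj N s2) * Pi2 N) * (U ⊗ₖ U)ᴴ)) =
    (2:ℂ)⁻¹ * ((Matrix.trace (Zproj N s1 * U * Zproj N s2 * Uᴴ))^2 +
      Matrix.trace (Zproj N s1 * U * Zproj N s2 * Uᴴ *
        (Zproj N s1 * U * Zproj N s2 * Uᴴ))) := by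
  rw [kron_conjTranspose, Pi2]
  simp only [Matrix.mul_smul, Matrix.smul_mul, Matrix.trace_smul, smul_eq_mul]
  congr 1
  simp only [Matrix.mul_add, Matrix.mul_one, Matrix.add_mul, Matrix.trace_add]
  congr 1
  · simp only [← Matrix.mul_kronecker_mul, Matrix.trace_kronecker, ← Matrix.mul_assoc, sq]
  · exact kron_swap_conj_trace (Zproj N s1) (Zproj N s2) U

/-- **Statement 6.** OTOC identity for the Z2-asymmetry generating power:
`A_p(U) = 1 − (1/(4𝒵)) Σ_{s1,s2} [(Tr(Z_{s1} U Z_{s2} U†))² + Tr(Z_{s1} U Z_{s2} U† Z_{s1} U Z_{s2} U†)]`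
with `𝒵 = Tr((Z_0⊗Z_0)Π^{(2)})`. -/
theorem Z2_asymmetry_otoc (N : ℕ) (hN : 1 ≤ N)
    (U : Matrix (QIdx N) (QIdx N) ℂ) (hU : U ∈ Matrix.unitaryGroup (QIdx N) ℂ) :
    Ap N U =
      1 - (1 / (4 * Matrix.trace ((Zproj N 0 ⊗ₖ Zproj N 0) * Pi2 N))) *
        ∑ s1 : Fin 2, ∑ s2 : Fin 2,
          ((Matrix.trace (Zproj N s1 * U * Zproj N s2 * Uᴴ)) ^ 2 +
            Matrix.trace (Zproj N s1 * U * Zproj N s2 * Uᴴ *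
              (Zproj N s1 * U * Zproj N s2 * Uᴴ))) := by
  set c := Matrix.trace ((Zproj N 0 ⊗ₖ Zproj N 0) * Pi2 N) with hc
  have hc1 : Matrix.trace ((Zproj N 1 ⊗ₖ Zproj N 1) * Pi2 N) = c := Zcal_one_eq_zero N hN
  rw [Ap, rhoF, hc1, ← hc]
  have expand : Matrix.trace ((Zproj N 0 ⊗ₖ Zproj N 0 + Zproj N 1 ⊗ₖ Zproj N 1) *
      ((U ⊗ₖ U) * ((2:ℂ)⁻¹ •
        (c⁻¹ • ((Zproj N 0 ⊗ₖ Zproj N 0) * Pi2 N) + c⁻¹ • ((Zproj N 1 ⊗ₖ Zproj N 1) * Pi2 N))) *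
        (U ⊗ₖ U)ᴴ)) =
      (2:ℂ)⁻¹ * (c⁻¹ * ∑ s1 : Fin 2, ∑ s2 : Fin 2,
        Matrix.trace ((Zproj N s1 ⊗ₖ Zproj N s1) *
          ((U ⊗ₖ U) * ((Zproj N s2 ⊗ₖ Zproj N s2) * Pi2 N) * (U ⊗ₖ U)ᴴ))) := by
    simp only [Matrix.mul_smul, Matrix.smul_mul, Matrix.trace_smul, smul_eq_mul,
      Matrix.mul_add, Matrix.add_mul, Matrix.trace_add, Fin.sum_univ_two]
    ring
  rw [expand]
  simp only [key_trace N U, Fin.sum_univ_two, one_div, mul_inv]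
  ring
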